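/- (Equality case of Wirtinger's inequality, converse direction.) Let V be a real inner product space and J : V → V a linear map satisfying J² = −id and ⟨Ju, Jv⟩ = ⟨u, v⟩ for all u, v ∈ V. Define ω(u, v) = ⟨Ju, v⟩. Let W ⊆ V be a subspace of real dimension 2m with J(W) = W. Then there exists an orthonormal basis of W of the form (e₁, Je₁, e₂, Je₂, …, e_m, Je_m) (the orientation induced by the complex structure), and on this basis ω^m(e₁, Je₁, …, e_m, Je_m) = m!. -/

import Mathlib

/-- The `m`-fold wedge power `ω^m = ω ∧ ⋯ ∧ ω` of a 2-form `ω`, evaluated on a tuple of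
`2m` vectors, given by the usual alternating sum over permutations:
`(ω^m)(v₁, …, v_{2m}) = (1/2^m) ∑_{σ ∈ S_{2m}} sign σ · ∏_{k=1}^m ω(v_{σ(2k-1)}, v_{σ(2k)})`. -/
noncomputable def omegaPow {V : Type*} (m : ℕ) (ω : V → V → ℝ)
    (v : Fin (2 * m) → V) : ℝ :=
  (∑ σ : Equiv.Perm (Fin (2 * m)), ((Equiv.Perm.sign σ : ℤ) : ℝ) *
    ∏ k : Fin m,
      ω (v (σ ⟨2 * (k : ℕ), by have := k.isLt; omega⟩))
        (v (σ ⟨2 * (k : ℕ) + 1, by have := k.isLt; omega⟩))) / 2 ^ m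


open Equiv Finset

/-- Equivalence `Fin (2*m) ≃ Fin m × Bool`: `2k ↦ (k, false)`, `2k+1 ↦ (k, true)`. -/
def pairEquiv (m : ℕ) : Fin (2 * m) ≃ Fin m × Bool where
  toFun i := (⟨(i : ℕ) / 2, by have := i.isLt; omega⟩, decide ((i : ℕ) % 2 = 1))
  invFun p := ⟨2 * (p.1 : ℕ) + (if p.2 then 1 else 0), by have := p.1.isLt; cases p.2 <;> simp <;> omega⟩
  left_inv i := by
    apply Fin.ext
    simp only []
    by_cases h : (i : ℕ) % 2 = 1 <;> simp [h] <;> omega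
  right_inv p := by
    obtain ⟨k, b⟩ := p
    cases b <;> refine Prod.ext (Fin.ext ?_) ?_ <;> simp <;> omega

lemma pairEquiv_symm_false (m : ℕ) (k : Fin m) :
    (pairEquiv m).symm (k, false) = ⟨2 * (k : ℕ), by have := k.isLt; omega⟩ := by
  apply Fin.ext; simp [pairEquiv]

lemma pairEquiv_symm_true (m : ℕ) (k : Fin m) :
    (pairEquiv m).symm (k, true) = ⟨2 * (k : ℕ) + 1, by have := k.isLt; omega⟩ := by
  apply Fin.ext; simp [pairEquiv]

theorem sum_sign_prod (m : ℕ) (A : Fin (2 * m) → Fin (2 * m) → ℝ)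
    (hA : ∀ p q : Fin m × Bool, A ((pairEquiv m).symm p) ((pairEquiv m).symm q) =
      if q = (p.1, !p.2) then (if p.2 then -1 else 1) else 0) :
    (∑ σ : Equiv.Perm (Fin (2 * m)), ((Equiv.Perm.sign σ : ℤ) : ℝ) *
      ∏ k : Fin m,
        A (σ ⟨2 * (k : ℕ), by have := k.isLt; omega⟩)
          (σ ⟨2 * (k : ℕ) + 1, by have := k.isLt; omega⟩))
      = 2 ^ m * (m.factorial : ℝ) := by
  classical
  set e := pairEquiv m with he
  set B : (Fin m × Bool) → (Fin m × Bool) → ℝ := fun p q => A (e.symm p) (e.symm q) with hB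
  have hBval : ∀ p q : Fin m × Bool,
      B p q = if q = (p.1, !p.2) then (if p.2 then -1 else 1) else 0 := fun p q => hA p q
  -- Step 1: reindex over Perm (Fin m × Bool)
  have step1 : (∑ σ : Equiv.Perm (Fin (2 * m)), ((Equiv.Perm.sign σ : ℤ) : ℝ) *
      ∏ k : Fin m,
        A (σ ⟨2 * (k : ℕ), by have := k.isLt; omega⟩)
          (σ ⟨2 * (k : ℕ) + 1, by have := k.isLt; omega⟩))
      = ∑ π : Equiv.Perm (Fin m × Bool), ((Equiv.Perm.sign π : ℤ) : ℝ) *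
          ∏ k : Fin m, B (π (k, false)) (π (k, true)) := by
    refine Fintype.sum_equiv e.permCongr _ _ ?_
    intro σ
    rw [Equiv.Perm.sign_permCongr]
    congr 1
    refine Finset.prod_congr rfl fun k _ => ?_
    rw [← pairEquiv_symm_false m k, ← pairEquiv_symm_true m k]
    simp only [hB, Equiv.permCongr_apply, Equiv.symm_apply_apply, he]
  rw [step1]
  -- the parametrization of the nonvanishing permutations
  set g : Equiv.Perm (Fin m) × (Fin m → Bool) → Equiv.Perm (Fin m × Bool) := fun x =>
    ((Equiv.prodCongrRight (fun k => if x.2 k then Equiv.swap false true else Equiv.refl Bool)).trans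
      (Equiv.prodCongrLeft (fun _ => x.1))) with hg
  have hg_apply : ∀ x (k : Fin m) (b : Bool), g x (k, b) = (x.1 k, xor (x.2 k) b) := by
    intro x k b
    simp only [hg, Equiv.trans_apply, Equiv.prodCongrRight_apply, Equiv.prodCongrLeft_apply]
    congr 1
    split <;> cases b <;> simp_all
  have hg_inj : Function.Injective g := by
    intro x y hxy
    have h1 : ∀ k : Fin m, (x.1 k, x.2 k) = (y.1 k, y.2 k) := by
      intro k
      have h := congrArg (fun π : Equiv.Perm (Fin m × Bool) => π (k, false)) hxy
      simpa only [hg_apply, Bool.xor_false] using h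
    have hfst : x.1 = y.1 := Equiv.ext fun k => congrArg Prod.fst (h1 k)
    have hsnd : x.2 = y.2 := funext fun k => congrArg Prod.snd (h1 k)
    exact Prod.ext hfst hsnd
  -- vanishing off the image
  have hvan : ∀ π : Equiv.Perm (Fin m × Bool), π ∉ Finset.univ.image g →
      ((Equiv.Perm.sign π : ℤ) : ℝ) * ∏ k : Fin m, B (π (k, false)) (π (k, true)) = 0 := by
    intro π hπ
    by_cases hall : ∀ k : Fin m, π (k, true) = ((π (k, false)).1, !(π (k, false)).2)
    · exfalso
      apply hπ
      have hinj : Function.Injective (fun k : Fin m => (π (k, false)).1) := by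
        intro k k' h
        by_contra hkk
        rcases eq_or_ne (π (k, false)).2 (π (k', false)).2 with h2 | h2
        · exact hkk (Prod.ext_iff.1 (π.injective (Prod.ext h h2)) |>.1)
        · have hflip : π (k', false) = π (k, true) := by
            rw [hall k]
            refine Prod.ext h.symm ?_
            cases hxx : (π (k, false)).2 <;> cases hyy : (π (k', false)).2 <;>
              simp_all
          have := π.injective hflip
          simp at this
      let τ : Equiv.Perm (Fin m) :=
        Equiv.ofBijective _ ((Finite.injective_iff_bijective).1 hinj)
      refine Finset.mem_image.2 ⟨(τ, fun k => (π (k, false)).2), Finset.mem_univ _, ?_⟩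
      apply Equiv.ext
      rintro ⟨k, b⟩
      have hτ : τ k = (π (k, false)).1 := rfl
      cases b
      · rw [hg_apply]
        simp only [hτ, Bool.xor_false]
      · rw [hg_apply, hall k]
        simp only [hτ, Bool.xor_true]
    · push_neg at hall
      obtain ⟨k, hk⟩ := hall
      have : B (π (k, false)) (π (k, true)) = 0 := by
        rw [hBval]
        rw [if_neg hk]
      rw [Finset.prod_eq_zero (Finset.mem_univ k) this, mul_zero]
  -- value on the image
  have hval : ∀ x : Equiv.Perm (Fin m) × (Fin m → Bool),
      ((Equiv.Perm.sign (g x) : ℤ) : ℝ) * ∏ k : Fin m, B (g x (k, false)) (g x (k, true)) = 1 := by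
    rintro ⟨τ, ε⟩
    have hs : Equiv.Perm.sign (g (τ, ε)) = ∏ k : Fin m, (if ε k then (-1 : ℤˣ) else 1) := by
      have hmul : g (τ, ε) =
          (Equiv.prodCongrLeft (fun _ : Bool => τ)) *
            (Equiv.prodCongrRight (fun k => if ε k then Equiv.swap false true else Equiv.refl Bool)) := rfl
      rw [hmul, map_mul, Equiv.Perm.sign_prodCongrLeft, Equiv.Perm.sign_prodCongrRight]
      have h1 : (∏ _b : Bool, Equiv.Perm.sign τ) = 1 := by
        rw [Finset.prod_const]
        simp [Int.units_sq]
      rw [h1, one_mul]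
      refine Finset.prod_congr rfl fun k _ => ?_
      split <;> simp [Equiv.Perm.sign_swap]
    have hsR : ((Equiv.Perm.sign (g (τ, ε)) : ℤ) : ℝ)
        = ∏ k : Fin m, (if ε k then (-1 : ℝ) else 1) := by
      have hu := map_prod (Units.coeHom ℤ) (fun k => if ε k then (-1 : ℤˣ) else 1) Finset.univ
      simp only [Units.coeHom_apply] at hu
      rw [hs, hu, Int.cast_prod]
      refine Finset.prod_congr rfl fun k _ => ?_
      split <;> simp
    have hp : ∀ k : Fin m, B (g (τ, ε) (k, false)) (g (τ, ε) (k, true))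
        = (if ε k then (-1 : ℝ) else 1) := by
      intro k
      rw [hg_apply, hg_apply, hBval]
      simp
    rw [hsR]
    rw [Finset.prod_congr rfl fun k _ => hp k, ← Finset.prod_mul_distrib]
    refine Finset.prod_eq_one fun k _ => ?_
    split <;> norm_num
  rw [← Finset.sum_subset (Finset.subset_univ (Finset.univ.image g))
      (fun π _ h => hvan π h),
    Finset.sum_image (fun x _ y _ h => hg_inj h)]
  rw [Finset.sum_congr rfl fun x _ => hval x]
  simp [Finset.card_univ, Fintype.card_prod, Fintype.card_perm, Fintype.card_fun]
  ring

open Finset in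
lemma exists_adapted_family
    {V : Type*} [NormedAddCommGroup V] [InnerProductSpace ℝ V]
    (J : V →ₗ[ℝ] V)
    (hJ2 : ∀ v : V, J (J v) = -v)
    (hJc : ∀ u v : V, (inner ℝ (J u) (J v) : ℝ) = inner ℝ u v) :
    ∀ (m : ℕ) (W : Submodule ℝ V), FiniteDimensional ℝ W →
      Module.finrank ℝ W = 2 * m → Submodule.map J W = W →
      ∃ f : Fin (2 * m) → V, (∀ i, f i ∈ W) ∧ Orthonormal ℝ f ∧
        ∀ k : Fin m, f ⟨2 * (k : ℕ) + 1, by have := k.isLt; omega⟩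
          = J (f ⟨2 * (k : ℕ), by have := k.isLt; omega⟩) := by
  have hJm : ∀ (W : Submodule ℝ V), Submodule.map J W = W → ∀ {x : V}, x ∈ W → J x ∈ W := by
    intro W hJW x hx
    rw [← hJW]
    exact Submodule.mem_map_of_mem hx
  intro m
  induction m with
  | zero =>
    intro W _ _ _
    refine ⟨fun _ => 0, fun i => i.elim0, ?_, fun k => k.elim0⟩
    rw [orthonormal_iff_ite]
    intro i
    exact i.elim0
  | succ n ih =>
    intro W hWfd hW hJW
    -- pick a unit vector e ∈ W
    have hWne : W ≠ ⊥ := by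
      intro h
      rw [h, finrank_bot] at hW
      omega
    obtain ⟨x, hxW, hx0⟩ := Submodule.exists_mem_ne_zero_of_ne_bot hWne
    set e : V := ‖x‖⁻¹ • x with hedef
    have heW : e ∈ W := W.smul_mem _ hxW
    have hne : ‖e‖ = 1 := by
      rw [hedef, norm_smul, norm_inv, norm_norm, inv_mul_cancel₀ (norm_ne_zero_iff.2 hx0)]
    have he1 : (inner ℝ e e : ℝ) = 1 := by
      rw [real_inner_self_eq_norm_mul_norm, hne]; norm_num
    have hJe1 : (inner ℝ (J e) (J e) : ℝ) = 1 := by rw [hJc]; exact he1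
    have heJe : (inner ℝ e (J e) : ℝ) = 0 := by
      have h1 := hJc e (J e)
      rw [hJ2, inner_neg_right] at h1
      have h2 : (inner ℝ (J e) e : ℝ) = inner ℝ e (J e) := real_inner_comm _ _
      linarith
    have hJee : (inner ℝ (J e) e : ℝ) = 0 := by rw [real_inner_comm]; exact heJe
    have hJeW : J e ∈ W := hJm W hJW heW
    -- the plane spanned by e, J e
    set p : Fin 2 → V := ![e, J e] with hpdef
    have hpON : Orthonormal ℝ p := by
      rw [orthonormal_iff_ite]
      intro i j
      fin_cases i <;> fin_cases j <;>
        simp [hpdef, he1, heJe, hJee, hJe1, hne, (show ‖J e‖ = 1 from (mul_self_eq_one_iff.1 (by rw [← real_inner_self_eq_norm_mul_norm]; exact hJe1)).resolve_right (by linarith [norm_nonneg (J e)]))]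
    set P : Submodule ℝ V := Submodule.span ℝ (Set.range p) with hPdef
    have hPW : P ≤ W := by
      rw [hPdef, Submodule.span_le]
      rintro _ ⟨i, rfl⟩
      fin_cases i
      · exact heW
      · exact hJeW
    have hPrank : Module.finrank ℝ P = 2 := by
      rw [hPdef, finrank_span_eq_card hpON.linearIndependent]
      simp
    have hPeq : P = (ℝ ∙ e) ⊔ (ℝ ∙ (J e)) := by
      have : Set.range p = insert e {J e} := by
        rw [hpdef]
        simp [Matrix.range_cons, Matrix.range_empty]
        exact Set.pair_comm _ _
      rw [hPdef, this, Submodule.span_insert]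
    have hmemP : ∀ v : V, v ∈ Pᗮ ↔ ((inner ℝ e v : ℝ) = 0 ∧ (inner ℝ (J e) v : ℝ) = 0) := by
      intro v
      rw [hPeq, ← Submodule.inf_orthogonal, Submodule.mem_inf,
        Submodule.mem_orthogonal_singleton_iff_inner_right,
        Submodule.mem_orthogonal_singleton_iff_inner_right]
    -- orthogonal complement of the plane inside W
    set U : Submodule ℝ V := Pᗮ ⊓ W with hUdef
    haveI hUfd : FiniteDimensional ℝ U := Submodule.finiteDimensional_of_le inf_le_right
    have hUrank : Module.finrank ℝ U = 2 * n :=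
      Submodule.finrank_add_inf_finrank_orthogonal' hPW (by rw [hPrank]; omega)
    have hJstep : ∀ u : V, u ∈ U → J u ∈ U := by
      intro u hu
      obtain ⟨huP, huW⟩ := Submodule.mem_inf.1 hu
      obtain ⟨h1, h2⟩ := (hmemP u).1 huP
      refine Submodule.mem_inf.2 ⟨(hmemP _).2 ⟨?_, ?_⟩, hJm W hJW huW⟩
      · have h3 := hJc e (J u)
        rw [hJ2, inner_neg_right] at h3
        rw [← h3, h2, neg_zero]
      · rw [hJc]; exact h1
    have hJU : Submodule.map J U = U := by
      apply le_antisymm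
      · rintro _ ⟨u, hu, rfl⟩
        exact hJstep u hu
      · intro u hu
        refine ⟨-(J u), Submodule.neg_mem _ (hJstep u hu), ?_⟩
        rw [map_neg, hJ2, neg_neg]
    obtain ⟨f', hf'U, hf'ON, hf'pair⟩ := ih U hUfd hUrank hJU
    have hf'W : ∀ j, f' j ∈ W := fun j => (Submodule.mem_inf.1 (hf'U j)).2
    have hf'orth : ∀ j, (inner ℝ e (f' j) : ℝ) = 0 ∧ (inner ℝ (J e) (f' j) : ℝ) = 0 :=
      fun j => (hmemP _).1 (Submodule.mem_inf.1 (hf'U j)).1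
    -- assemble the family
    set f : Fin (2 * (n + 1)) → V := fun i =>
      if h : (i : ℕ) < 2 then (if (i : ℕ) = 0 then e else J e)
      else f' ⟨(i : ℕ) - 2, by have := i.isLt; omega⟩ with hfdef
    have hf0 : ∀ (h : 0 < 2 * (n + 1)), f ⟨0, h⟩ = e := fun h => by simp [hfdef]
    have hf1 : ∀ (h : 1 < 2 * (n + 1)), f ⟨1, h⟩ = J e := fun h => by simp only [hfdef]; rw [dif_pos (by norm_num), if_neg (by norm_num)]
    have hf2 : ∀ (jv : ℕ) (h : jv + 2 < 2 * (n + 1)),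
        f ⟨jv + 2, h⟩ = f' ⟨jv, by omega⟩ := by
      intro jv h
      simp only [hfdef]
      rw [dif_neg (by omega)]
      simp
    refine ⟨f, ?_, ?_, ?_⟩
    · -- membership
      rintro ⟨iv, hi⟩
      rcases Nat.lt_or_ge iv 2 with h2 | h2
      · interval_cases iv
        · rw [hf0]; exact heW
        · rw [hf1]; exact hJeW
      · obtain ⟨l, rfl⟩ : ∃ l, iv = l + 2 := ⟨iv - 2, by omega⟩
        rw [hf2]
        exact hf'W _
    · -- orthonormality
      rw [orthonormal_iff_ite]
      have hON' := orthonormal_iff_ite.1 hf'ON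
      rintro ⟨iv, hi⟩ ⟨jv, hj⟩
      rcases Nat.lt_or_ge iv 2 with hi2 | hi2 <;> rcases Nat.lt_or_ge jv 2 with hj2 | hj2
      · obtain rfl | rfl : iv = 0 ∨ iv = 1 := by omega
        all_goals obtain rfl | rfl : jv = 0 ∨ jv = 1 := by omega
        all_goals simp only [hf0, hf1]
        · simp [he1, hne]
        · rw [if_neg (by simp [Fin.ext_iff])]; exact heJe
        · rw [if_neg (by simp [Fin.ext_iff])]; exact hJee
        · simp [hJe1, (show ‖J e‖ = 1 from (mul_self_eq_one_iff.1 (by rw [← real_inner_self_eq_norm_mul_norm]; exact hJe1)).resolve_right (by linarith [norm_nonneg (J e)]))]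
      · obtain ⟨l, rfl⟩ : ∃ l, jv = l + 2 := ⟨jv - 2, by omega⟩
        rw [hf2]
        rw [if_neg (by simp [Fin.ext_iff]; omega)]
        interval_cases iv
        · rw [hf0]; exact (hf'orth _).1
        · rw [hf1]; exact (hf'orth _).2
      · obtain ⟨l, rfl⟩ : ∃ l, iv = l + 2 := ⟨iv - 2, by omega⟩
        rw [hf2]
        rw [if_neg (by simp [Fin.ext_iff]; omega)]
        rw [real_inner_comm]
        interval_cases jv
        · rw [hf0]; exact (hf'orth _).1
        · rw [hf1]; exact (hf'orth _).2
      · obtain ⟨l, rfl⟩ : ∃ l, iv = l + 2 := ⟨iv - 2, by omega⟩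
        obtain ⟨l', rfl⟩ : ∃ l', jv = l' + 2 := ⟨jv - 2, by omega⟩
        rw [hf2, hf2, hON']
        by_cases hll : l = l'
        · subst hll; simp
        · rw [if_neg (by simp [Fin.ext_iff]; omega), if_neg (by simp [Fin.ext_iff]; omega)]
    · -- the pairing property
      rintro ⟨kv, hk⟩
      rcases Nat.eq_zero_or_pos kv with rfl | hkpos
      · have h1 : (⟨2 * 0 + 1, by omega⟩ : Fin (2 * (n + 1))) = ⟨1, by omega⟩ := rfl
        have h0 : (⟨2 * 0, by omega⟩ : Fin (2 * (n + 1))) = ⟨0, by omega⟩ := rfl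
        rw [h1, h0, hf0, hf1]
      · obtain ⟨l, rfl⟩ : ∃ l, kv = l + 1 := ⟨kv - 1, by omega⟩
        have h1 : (⟨2 * (l + 1) + 1, by omega⟩ : Fin (2 * (n + 1)))
            = ⟨(2 * l + 1) + 2, by omega⟩ := by simp [Fin.ext_iff]; omega
        have h0 : (⟨2 * (l + 1), by omega⟩ : Fin (2 * (n + 1)))
            = ⟨(2 * l) + 2, by omega⟩ := by simp [Fin.ext_iff]; omega
        rw [h1, h0, hf2, hf2]
        have := hf'pair ⟨l, by omega⟩
        convert this using 2 <;> simp

/-- **equality case of Wirtinger's inequality, converse direction.**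
Let `V` be a real inner product space, `J` a compatible almost complex structure,
`ω (u, v) = ⟨Ju, v⟩`.  Let `W ⊆ V` be a subspace of real dimension `2m` with `J (W) = W`.
Then `W` has an orthonormal basis of the form `(e₁, Je₁, …, e_m, Je_m)` (the orientation
induced by the complex structure), and on this basis
`ω^m (e₁, Je₁, …, e_m, Je_m) = m!`. -/
theorem exists_canonical_basis_omegaPow_eq_factorial
    {V : Type*} [NormedAddCommGroup V] [InnerProductSpace ℝ V]
    (J : V →ₗ[ℝ] V)
    (hJ2 : ∀ v : V, J (J v) = -v)
    (hJc : ∀ u v : V, (inner ℝ (J u) (J v) : ℝ) = inner ℝ u v)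
    (ω : V → V → ℝ)
    (hω : ∀ u v : V, ω u v = inner ℝ (J u) v)
    (m : ℕ) (W : Submodule ℝ V) [FiniteDimensional ℝ W]
    (hW : Module.finrank ℝ W = 2 * m)
    (hJW : Submodule.map J W = W) :
    ∃ b : OrthonormalBasis (Fin (2 * m)) ℝ W,
      (∀ k : Fin m,
        ((b ⟨2 * (k : ℕ) + 1, by have := k.isLt; omega⟩ : W) : V) =
          J ((b ⟨2 * (k : ℕ), by have := k.isLt; omega⟩ : W) : V)) ∧
      omegaPow m ω (fun i => (b i : W)) = (m.factorial : ℝ) := by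
  classical
  obtain ⟨f, hfW, hfON, hfpair⟩ :=
    exists_adapted_family J hJ2 hJc m W inferInstance hW hJW
  set fW : Fin (2 * m) → W := fun i => ⟨f i, hfW i⟩ with hfWdef
  have hcoe : ∀ i, (fW i : V) = f i := fun i => rfl
  have hfWON : Orthonormal ℝ fW := by
    rw [orthonormal_iff_ite]
    intro i j
    have h := orthonormal_iff_ite.1 hfON i j
    rw [← h]
    exact Submodule.coe_inner W (fW i) (fW j)
  have hcard : Fintype.card (Fin (2 * m)) = Module.finrank ℝ W := by
    simp [hW]
  set b : OrthonormalBasis (Fin (2 * m)) ℝ W :=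
    OrthonormalBasis.mk hfWON
      (ge_of_eq (hfWON.linearIndependent.span_eq_top_of_card_eq_finrank' hcard)) with hbdef
  have hb : ∀ i, b i = fW i := fun i => by rw [hbdef, OrthonormalBasis.coe_mk]
  have hbpair : ∀ k : Fin m,
      ((b ⟨2 * (k : ℕ) + 1, by have := k.isLt; omega⟩ : W) : V) =
        J ((b ⟨2 * (k : ℕ), by have := k.isLt; omega⟩ : W) : V) := by
    intro k
    rw [hb, hb, hcoe, hcoe]
    exact hfpair k
  refine ⟨b, hbpair, ?_⟩
  -- inner products of the basis vectors in V
  have hQ : ∀ i j : Fin (2 * m),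
      (inner ℝ ((b i : W) : V) ((b j : W) : V) : ℝ) = if i = j then 1 else 0 := by
    intro i j
    rw [hb, hb, hcoe, hcoe]
    exact orthonormal_iff_ite.1 hfON i j
  have hJb : ∀ k : Fin m,
      J ((b ⟨2 * (k : ℕ), by have := k.isLt; omega⟩ : W) : V) =
        ((b ⟨2 * (k : ℕ) + 1, by have := k.isLt; omega⟩ : W) : V) :=
    fun k => (hbpair k).symm
  have hJb2 : ∀ k : Fin m,
      J ((b ⟨2 * (k : ℕ) + 1, by have := k.isLt; omega⟩ : W) : V) =
        -((b ⟨2 * (k : ℕ), by have := k.isLt; omega⟩ : W) : V) :=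
    fun k => by rw [← hJb k, hJ2]
  -- the matrix of ω on the basis
  have hA : ∀ p q : Fin m × Bool,
      (fun i j : Fin (2 * m) => ω ((b i : W) : V) ((b j : W) : V))
          ((pairEquiv m).symm p) ((pairEquiv m).symm q) =
        if q = (p.1, !p.2) then (if p.2 then (-1 : ℝ) else 1) else 0 := by
    rintro ⟨l, bp⟩ ⟨l', bq⟩
    cases bp <;> cases bq <;>
      simp only [pairEquiv_symm_false, pairEquiv_symm_true, hω]
    · -- (l,false) (l',false)
      rw [hJb l, hQ, if_neg (by simp [Fin.ext_iff]; omega), if_neg (by simp)]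
    · -- (l,false) (l',true)
      rw [hJb l, hQ]
      by_cases hll : l = l'
      · subst hll; simp
      · rw [if_neg (by simp [Fin.ext_iff]; omega),
          if_neg (fun h => hll ((by simpa using congrArg Prod.fst h : l' = l)).symm)]
    · -- (l,true) (l',false)
      rw [hJb2 l, inner_neg_left, hQ]
      by_cases hll : l = l'
      · subst hll; simp
      · rw [if_neg (by simp [Fin.ext_iff]; omega),
          if_neg (fun h => hll ((by simpa using congrArg Prod.fst h : l' = l)).symm)]
        simp
    · -- (l,true) (l',true)
      rw [hJb2 l, inner_neg_left, hQ, if_neg (by simp [Fin.ext_iff]; omega),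
        if_neg (by simp)]
      simp
  have hsum := sum_sign_prod m (fun i j => ω ((b i : W) : V) ((b j : W) : V)) hA
  have hrfl : omegaPow m ω (fun i => (b i : W)) =
      (∑ σ : Equiv.Perm (Fin (2 * m)), ((Equiv.Perm.sign σ : ℤ) : ℝ) *
        ∏ k : Fin m,
          (fun i j : Fin (2 * m) => ω ((b i : W) : V) ((b j : W) : V))
            (σ ⟨2 * (k : ℕ), by have := k.isLt; omega⟩)
            (σ ⟨2 * (k : ℕ) + 1, by have := k.isLt; omega⟩)) / 2 ^ m := rfl
  rw [hrfl, hsum]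
  have h2 : (2 : ℝ) ^ m ≠ 0 := by positivity
  field_simp
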